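/- Let (αₘ)_{m≤M} be complex numbers and (xₘ)_{m≤M} real numbers, and T ≥ 1. Then (1/T)∫_{-T}^{T} |∑_{m≤M} αₘ e(xₘ t)|² dt ≪ ∑_{m₁,m₂≤M, 2T|x_{m₁}-x_{m₂}|≤1} |α_{m₁} α_{m₂}|, with an absolute implied constant; here e(x) = exp(2πix). -/

import Mathlib

open Finset intervalIntegral

open MeasureTheory FourierTransform
local notation "π" => Real.pi

namespace Stmt5Aux


noncomputable def fej (δ : ℝ) (t : ℝ) : ℝ :=
  if t = 0 then δ ^ 2 else Real.sin (π * δ * t) ^ 2 / (π * t) ^ 2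

noncomputable def tri (δ : ℝ) (ξ : ℝ) : ℂ := ((max 0 (δ - |ξ|) : ℝ) : ℂ)

lemma fej_nonneg (δ t : ℝ) : 0 ≤ fej δ t := by
  unfold fej; split <;> positivity

lemma fej_even (δ t : ℝ) : fej δ (-t) = fej δ t := by
  unfold fej
  rcases eq_or_ne t 0 with h | h
  · simp [h]
  · rw [if_neg h, if_neg (neg_ne_zero.mpr h)]
    rw [show π * δ * -t = -(π * δ * t) by ring, Real.sin_neg]
    ring

lemma fej_le_sq {δ : ℝ} (t : ℝ) : fej δ t ≤ δ ^ 2 := by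
  unfold fej
  split
  · exact le_refl _
  · next h =>
    rw [div_le_iff₀ (by positivity)]
    have h1 : Real.sin (π * δ * t) ^ 2 ≤ (π * δ * t) ^ 2 := Real.sin_sq_le_sq
    nlinarith [Real.pi_pos, sq_nonneg (π * t)]

lemma measurable_fej (δ : ℝ) : Measurable (fej δ) := by
  unfold fej
  exact Measurable.ite (measurableSet_eq_fun measurable_id measurable_const)
    measurable_const ((Real.measurable_sin.comp (measurable_const.mul measurable_id)
      |>.pow_const 2).div ((measurable_const.mul measurable_id).pow_const 2))



lemma integrable_fej {δ : ℝ} (hδ : 0 < δ) : Integrable (fej δ) := by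
  have hbd : ∀ t : ℝ, ‖fej δ t‖ ≤ (2 * δ ^ 2 + 2) * (1 + t ^ 2)⁻¹ := by
    intro t
    rw [Real.norm_eq_abs, abs_of_nonneg (fej_nonneg δ t)]
    rw [← div_eq_mul_inv, le_div_iff₀ (by positivity)]
    rcases le_or_gt (t ^ 2) 1 with h | h
    · nlinarith [fej_le_sq (δ := δ) t, fej_nonneg δ t, sq_nonneg δ]
    · have ht : t ≠ 0 := by intro h0; rw [h0] at h; norm_num at h
      have h2 : fej δ t ≤ 1 / (π * t) ^ 2 := by
        unfold fej
        rw [if_neg ht, div_le_div_iff₀ (by positivity) (by positivity)]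
        nlinarith [Real.sin_sq_le_one (π * δ * t), sq_nonneg (π * t)]
      have h3 : (1 : ℝ) / (π * t) ^ 2 * (1 + t ^ 2) ≤ 2 := by
        rw [div_mul_eq_mul_div, div_le_iff₀ (by positivity)]
        have hπ : 9 ≤ π ^ 2 := by nlinarith [Real.pi_gt_three]
        nlinarith [hπ, h, sq_nonneg t]
      nlinarith [fej_nonneg δ t, sq_nonneg t, sq_nonneg δ]
  exact (integrable_inv_one_add_sq.const_mul (2 * δ ^ 2 + 2)).mono'
    ((measurable_fej δ).aestronglyMeasurable) (Filter.Eventually.of_forall hbd)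



lemma continuous_tri (δ : ℝ) : Continuous (tri δ) :=
  Complex.continuous_ofReal.comp (continuous_const.max (continuous_const.sub continuous_abs))

lemma tri_eq_zero {δ ξ : ℝ} (h : δ ≤ |ξ|) : tri δ ξ = 0 := by
  simp [tri, max_eq_left (by linarith : δ - |ξ| ≤ 0)]

lemma integrable_tri (δ : ℝ) : Integrable (tri δ) := by
  apply (continuous_tri δ).integrable_of_hasCompactSupport
  apply HasCompactSupport.intro (isCompact_Icc (a := -δ) (b := δ))
  intro ξ hξ
  simp only [Set.mem_Icc, not_and_or, not_le] at hξ
  apply tri_eq_zero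
  rcases hξ with h | h <;> cases abs_cases ξ <;> linarith

lemma fourier_tri {δ : ℝ} (hδ : 0 < δ) (t : ℝ) :
    𝓕 (tri δ) t = ((fej δ t : ℝ) : ℂ) := by
  rw [fej, Real.fourier_real_eq_integral_exp_smul]
  have hzero : ∀ v : ℝ, v ∉ Set.Ioc (-δ) δ →
      Complex.exp (↑(-2 * π * v * t) * Complex.I) • tri δ v = 0 := by
    intro v hv
    have : δ ≤ |v| := by
      simp only [Set.mem_Ioc, not_and_or, not_lt, not_le] at hv
      rcases hv with h | h <;> cases abs_cases v <;> linarith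
    rw [tri_eq_zero this, smul_zero]
  rw [← MeasureTheory.setIntegral_eq_integral_of_forall_compl_eq_zero hzero,
    ← intervalIntegral.integral_of_le (by linarith : -δ ≤ δ)]
  have hcont : Continuous fun v : ℝ => Complex.exp (↑(-2 * π * v * t) * Complex.I) • tri δ v := by
    apply Continuous.smul (f := fun v : ℝ => Complex.exp (↑(-2 * π * v * t) * Complex.I)) _ (continuous_tri δ)
    exact Complex.continuous_exp.comp (by fun_prop)
  rw [← intervalIntegral.integral_add_adjacent_intervals (a := -δ) (b := 0) (c := δ)
    (hcont.intervalIntegrable _ _) (hcont.intervalIntegrable _ _)]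
  rcases eq_or_ne t 0 with ht | ht
  · -- t = 0 case
    rw [if_pos ht]
    subst ht
    simp only [mul_zero, Complex.ofReal_zero, zero_mul, Complex.exp_zero, one_smul]
    have h1 : ∫ v in (0:ℝ)..δ, tri δ v = ((δ ^ 2 / 2 : ℝ) : ℂ) := by
      have : ∀ v ∈ Set.uIcc (0:ℝ) δ, tri δ v = ((δ : ℂ) - (v : ℂ)) := by
        intro v hv
        rw [Set.uIcc_of_le (by linarith)] at hv
        rw [tri, abs_of_nonneg hv.1, max_eq_right (by linarith [hv.2])]
        push_cast; ring
      rw [intervalIntegral.integral_congr this,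
        show (fun v : ℝ => (δ : ℂ) - (v : ℂ)) = fun v : ℝ => ((δ - v : ℝ) : ℂ) by push_cast; rfl,
        _root_.intervalIntegral.integral_ofReal]
      congr 1
      rw [intervalIntegral.integral_sub intervalIntegrable_const
        intervalIntegral.intervalIntegrable_id]
      simp [integral_id]
      ring
    have h2 : ∫ v in (-δ:ℝ)..0, tri δ v = ((δ ^ 2 / 2 : ℝ) : ℂ) := by
      have : ∀ v ∈ Set.uIcc (-δ) (0:ℝ), tri δ v = (((δ + v : ℝ)) : ℂ) := by
        intro v hv
        rw [Set.uIcc_of_le (by linarith)] at hv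
        rw [tri, abs_of_nonpos hv.2, max_eq_right (by linarith [hv.1])]
        push_cast; ring
      rw [intervalIntegral.integral_congr this, _root_.intervalIntegral.integral_ofReal]
      congr 1
      rw [intervalIntegral.integral_add intervalIntegrable_const
        intervalIntegral.intervalIntegrable_id]
      simp [integral_id]
      ring
    rw [h1, h2]
    push_cast
    ring
  · rw [if_neg ht]
    obtain ⟨c, hc⟩ : ∃ c : ℂ, c = 2 * (π : ℂ) * (t : ℂ) * Complex.I := ⟨_, rfl⟩
    have hc0 : c ≠ 0 := by
      rw [hc]
      apply mul_ne_zero _ Complex.I_ne_zero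
      apply mul_ne_zero _ (Complex.ofReal_ne_zero.mpr ht)
      apply mul_ne_zero two_ne_zero
      exact_mod_cast Complex.ofReal_ne_zero.mpr Real.pi_ne_zero
    have hbase : ∀ v : ℝ, HasDerivAt (fun v : ℝ => ((v : ℂ))) 1 v := fun v =>
      Complex.ofRealCLM.hasDerivAt
    have hlin : ∀ v : ℝ, HasDerivAt (fun v : ℝ => -(c * (v : ℂ))) (-c) v := by
      intro v
      exact (((hbase v).const_mul c).neg).congr_deriv (by rw [mul_one])
    have hexp : ∀ v : ℝ, HasDerivAt (fun v : ℝ => Complex.exp (-(c * v)))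
        (Complex.exp (-(c * v)) * (-c)) v := fun v => (hlin v).cexp
    have hG : ∀ v : ℝ, HasDerivAt
        (fun v : ℝ => Complex.exp (-(c * v)) * (((v : ℂ) - δ) / c + 1 / c ^ 2))
        (Complex.exp (-(c * v)) * ((δ : ℂ) - v)) v := by
      intro v
      have h2 : HasDerivAt (fun v : ℝ => (((v : ℂ) - δ) / c + 1 / c ^ 2)) (1 / c) v :=
        (((hbase v).sub_const (δ : ℂ)).div_const c).add_const (1 / c ^ 2)
      refine ((hexp v).mul h2).congr_deriv ?_
      field_simp
      ring
    have hH : ∀ v : ℝ, HasDerivAt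
        (fun v : ℝ => Complex.exp (-(c * v)) * ((-(v : ℂ) - δ) / c - 1 / c ^ 2))
        (Complex.exp (-(c * v)) * ((δ : ℂ) + v)) v := by
      intro v
      have h2 : HasDerivAt (fun v : ℝ => ((-(v : ℂ) - δ) / c - 1 / c ^ 2)) (-1 / c) v :=
        (((hbase v).neg.sub_const (δ : ℂ)).div_const c).sub_const (1 / c ^ 2)
      refine ((hexp v).mul h2).congr_deriv ?_
      field_simp
      ring
    have hcont2 : Continuous fun v : ℝ => Complex.exp (-(c * v)) * ((δ : ℂ) - v) := by
      fun_prop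
    have hcont3 : Continuous fun v : ℝ => Complex.exp (-(c * v)) * ((δ : ℂ) + v) := by
      fun_prop
    have e1 : (∫ v in (0:ℝ)..δ, Complex.exp (↑(-2 * π * v * t) * Complex.I) • tri δ v)
        = ∫ v in (0:ℝ)..δ, Complex.exp (-(c * v)) * ((δ : ℂ) - v) := by
      apply intervalIntegral.integral_congr
      intro v hv
      rw [Set.uIcc_of_le (by linarith)] at hv
      show Complex.exp (↑(-2 * π * v * t) * Complex.I) • tri δ v = _
      rw [smul_eq_mul]
      congr 1
      · congr 1; rw [hc]; push_cast; ring
      · rw [tri, abs_of_nonneg hv.1, max_eq_right (by linarith [hv.2])]; push_cast; ring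
    have e2 : (∫ v in (-δ:ℝ)..0, Complex.exp (↑(-2 * π * v * t) * Complex.I) • tri δ v)
        = ∫ v in (-δ:ℝ)..0, Complex.exp (-(c * v)) * ((δ : ℂ) + v) := by
      apply intervalIntegral.integral_congr
      intro v hv
      rw [Set.uIcc_of_le (by linarith)] at hv
      show Complex.exp (↑(-2 * π * v * t) * Complex.I) • tri δ v = _
      rw [smul_eq_mul]
      congr 1
      · congr 1; rw [hc]; push_cast; ring
      · rw [tri, abs_of_nonpos hv.2, max_eq_right (by linarith [hv.1])]; push_cast; ring
    rw [e1, e2,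
      intervalIntegral.integral_eq_sub_of_hasDerivAt (fun v _ => hG v)
        (hcont2.intervalIntegrable _ _),
      intervalIntegral.integral_eq_sub_of_hasDerivAt (fun v _ => hH v)
        (hcont3.intervalIntegrable _ _)]
    have hgoal : Complex.exp (-(c * ((0:ℝ) : ℂ))) = 1 := by norm_num
    have hneg : Complex.exp (-(c * ((-δ : ℝ) : ℂ))) = Complex.exp (c * δ) := by
      congr 1; push_cast; ring
    have htotal : (Complex.exp (-(c * ((0:ℝ) : ℂ))) * ((-((0:ℝ):ℂ) - δ) / c - 1 / c ^ 2)
          - Complex.exp (-(c * ((-δ:ℝ) : ℂ))) * ((-((-δ:ℝ):ℂ) - δ) / c - 1 / c ^ 2))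
        + (Complex.exp (-(c * ((δ:ℝ) : ℂ))) * ((((δ:ℝ):ℂ) - δ) / c + 1 / c ^ 2)
          - Complex.exp (-(c * ((0:ℝ) : ℂ))) * ((((0:ℝ):ℂ) - δ) / c + 1 / c ^ 2))
        = (Complex.exp (c * δ) + Complex.exp (-(c * δ)) - 2) / c ^ 2 := by
      rw [hgoal, hneg]
      push_cast
      have h : c ^ 10 * c⁻¹ ^ 10 = 1 := by rw [← mul_pow, mul_inv_cancel₀ hc0, one_pow]
      field_simp
      ring
    rw [htotal]
    have hcos : Complex.exp (c * δ) + Complex.exp (-(c * δ))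
        = ((2 * Real.cos (2 * π * t * δ) : ℝ) : ℂ) := by
      have harg : c * δ = ((2 * π * t * δ : ℝ) : ℂ) * Complex.I := by
        rw [hc]; push_cast; ring
      rw [harg, ← neg_mul, Complex.exp_mul_I, Complex.exp_mul_I, Complex.cos_neg,
        Complex.sin_neg, ← Complex.ofReal_cos]
      push_cast
      ring
    have hc2 : c ^ 2 = ((-((2 * π * t) ^ 2) : ℝ) : ℂ) := by
      have : c ^ 2 = (2 * (π : ℂ) * t) ^ 2 * Complex.I ^ 2 := by rw [hc]; ring
      rw [this, Complex.I_sq]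
      push_cast
      ring
    rw [hcos, hc2,
      show ((2 * Real.cos (2 * π * t * δ) : ℝ) : ℂ) - 2
          = ((2 * Real.cos (2 * π * t * δ) - 2 : ℝ) : ℂ) by push_cast; ring,
      ← Complex.ofReal_div, Complex.ofReal_inj]
    have hπt : π * t ≠ 0 := mul_ne_zero Real.pi_ne_zero ht
    rw [Real.sin_sq_eq_half_sub, show 2 * (π * δ * t) = 2 * π * t * δ by ring]
    field_simp
    ring


lemma fourier_fej {δ : ℝ} (hδ : 0 < δ) :
    𝓕 (fun t : ℝ => ((fej δ t : ℝ) : ℂ)) = tri δ := by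
  have hF : 𝓕 (tri δ) = fun t : ℝ => ((fej δ t : ℝ) : ℂ) := funext fun t => fourier_tri hδ t
  have h1 : 𝓕⁻ (tri δ) = fun t : ℝ => ((fej δ t : ℝ) : ℂ) := by
    funext v
    rw [Real.fourierInv_eq_fourier_neg, fourier_tri hδ, fej_even]
  have h2 : Integrable (𝓕 (tri δ)) := by
    rw [hF]
    exact (integrable_fej hδ).ofReal
  have h3 := (continuous_tri δ).fourier_fourierInv_eq (integrable_tri δ) h2
  rw [h1] at h3
  exact h3

lemma key_integral {δ : ℝ} (hδ : 0 < δ) (θ : ℝ) :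
    ∫ t : ℝ, ((fej δ t : ℝ) : ℂ) * Complex.exp (2 * (π : ℂ) * Complex.I * ((θ : ℂ) * (t : ℂ)))
      = ((max 0 (δ - |θ|) : ℝ) : ℂ) := by
  have h := congrFun (fourier_fej hδ) (-θ)
  rw [Real.fourier_real_eq_integral_exp_smul] at h
  have heq : (fun v : ℝ => ((fej δ v : ℝ) : ℂ) *
        Complex.exp (2 * (π : ℂ) * Complex.I * ((θ : ℂ) * (v : ℂ))))
      = fun v : ℝ => Complex.exp (((-2 * π * v * (-θ) : ℝ) : ℂ) * Complex.I)
          • ((fej δ v : ℝ) : ℂ) := by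
    funext v
    rw [smul_eq_mul, mul_comm]
    congr 1
    push_cast
    ring
  rw [heq, h, tri, abs_neg]

lemma fej_ge {T : ℝ} (hT : 1 ≤ T) {t : ℝ} (ht : |t| ≤ T) :
    1 ≤ π ^ 2 * T ^ 2 * fej (1 / (2 * T)) t := by
  have hT0 : (0 : ℝ) < T := by linarith
  rcases eq_or_ne t 0 with h | h
  · subst h
    rw [fej, if_pos rfl]
    have he : π ^ 2 * T ^ 2 * (1 / (2 * T)) ^ 2 = π ^ 2 / 4 := by
      field_simp
      ring
    rw [he]
    nlinarith [Real.pi_gt_three]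
  · rw [fej, if_neg h]
    have ht0 : 0 < |t| := abs_pos.mpr h
    have hu2 : π * (1 / (2 * T)) * |t| ≤ π / 2 := by
      have h1 : π * (1 / (2 * T)) * |t| ≤ π * (1 / (2 * T)) * T :=
        mul_le_mul_of_nonneg_left ht (by positivity)
      have h2 : π * (1 / (2 * T)) * T = π / 2 := by field_simp
      linarith
    have hsin := Real.mul_le_sin (by positivity : 0 ≤ π * (1 / (2 * T)) * |t|) hu2
    have hval : 2 / π * (π * (1 / (2 * T)) * |t|) = |t| / T := by
      field_simp
    rw [hval] at hsin
    have hsq : Real.sin (π * (1 / (2 * T)) * t) ^ 2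
        = Real.sin (π * (1 / (2 * T)) * |t|) ^ 2 := by
      rcases abs_cases t with ⟨h1, _⟩ | ⟨h1, _⟩
      · rw [h1]
      · rw [h1, show π * (1 / (2 * T)) * -t = -(π * (1 / (2 * T)) * t) by ring, Real.sin_neg]
        ring
    have hsq2 : (|t| / T) ^ 2 ≤ Real.sin (π * (1 / (2 * T)) * |t|) ^ 2 :=
      pow_le_pow_left₀ (by positivity) hsin 2
    have h4 : π ^ 2 * T ^ 2 * ((|t| / T) ^ 2) = (π * t) ^ 2 := by
      rw [div_pow, sq_abs]
      field_simp
    have hfinal : (π * t) ^ 2 ≤ π ^ 2 * T ^ 2 * Real.sin (π * (1 / (2 * T)) * |t|) ^ 2 := by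
      rw [← h4]
      exact mul_le_mul_of_nonneg_left hsq2 (by positivity)
    rw [hsq, show π ^ 2 * T ^ 2 * (Real.sin (π * (1 / (2 * T)) * |t|) ^ 2 / (π * t) ^ 2)
        = π ^ 2 * T ^ 2 * Real.sin (π * (1 / (2 * T)) * |t|) ^ 2 / (π * t) ^ 2 by ring,
      le_div_iff₀ (by positivity : (0:ℝ) < (π * t) ^ 2), one_mul]
    exact hfinal

end Stmt5Aux

/-- Mean value theorem for exponential sums, upper bound: the `L²` average over `[-T,T]`
of `∑ αₘ e(xₘ t)` is bounded by the weighted count of pairs of frequencies within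
`1/(2T)` of each other, with an absolute constant. Here `e(x) = exp(2πix)`. -/
theorem stmt5 :
    ∃ C > (0 : ℝ), ∀ (M : ℕ) (α : ℕ → ℂ) (x : ℕ → ℝ) (T : ℝ), 1 ≤ T →
      (1 / T) * ∫ t in (-T)..T,
          ‖∑ m ∈ Finset.Icc 1 M,
            α m * Complex.exp (2 * (Real.pi : ℂ) * Complex.I * ((x m : ℂ) * (t : ℂ)))‖ ^ 2
        ≤ C * ∑ m₁ ∈ Finset.Icc 1 M, ∑ m₂ ∈ Finset.Icc 1 M,
            if 2 * T * |x m₁ - x m₂| ≤ 1 then ‖α m₁ * α m₂‖ else 0 := by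
  refine ⟨Real.pi ^ 2 / 2, by positivity, ?_⟩
  intro M α x T hT
  have hT0 : (0 : ℝ) < T := by linarith
  set δ : ℝ := 1 / (2 * T) with hδdef
  have hδ : 0 < δ := by positivity
  set S : ℝ → ℂ := fun t => ∑ m ∈ Finset.Icc 1 M,
    α m * Complex.exp (2 * (Real.pi : ℂ) * Complex.I * ((x m : ℂ) * (t : ℂ))) with hS
  set R : ℝ := ∑ m₁ ∈ Finset.Icc 1 M, ∑ m₂ ∈ Finset.Icc 1 M,
    (if 2 * T * |x m₁ - x m₂| ≤ 1 then ‖α m₁ * α m₂‖ else 0) with hR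
  have hScont : Continuous S := by
    apply continuous_finset_sum
    intro m _
    exact continuous_const.mul (Complex.continuous_exp.comp (by fun_prop))
  have hSbd : ∀ t : ℝ, ‖S t‖ ≤ ∑ m ∈ Finset.Icc 1 M, ‖α m‖ := by
    intro t
    refine (norm_sum_le _ _).trans (Finset.sum_le_sum fun m _ => ?_)
    have hn : ‖Complex.exp (((2 * Real.pi * (x m) * t : ℝ) : ℂ) * Complex.I)‖ = 1 := by
      rw [Complex.norm_exp_ofReal_mul_I]
    rw [norm_mul, show 2 * (Real.pi : ℂ) * Complex.I * ((x m : ℂ) * (t : ℂ))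
        = ((2 * Real.pi * (x m) * t : ℝ) : ℂ) * Complex.I by push_cast; ring,
      hn, mul_one]
  set A : ℝ := ∑ m ∈ Finset.Icc 1 M, ‖α m‖ with hA
  have hK := Stmt5Aux.integrable_fej hδ
  have hG : MeasureTheory.Integrable (fun t : ℝ => Stmt5Aux.fej δ t * ‖S t‖ ^ 2) := by
    have hb : ∀ t : ℝ, ‖‖S t‖ ^ 2‖ ≤ A ^ 2 := by
      intro t
      rw [Real.norm_eq_abs, abs_of_nonneg (by positivity)]
      exact pow_le_pow_left₀ (norm_nonneg _) (hSbd t) 2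
    have h := hK.bdd_mul ((hScont.norm.pow 2).aestronglyMeasurable) (Filter.Eventually.of_forall hb)
    simpa [mul_comm] using h
  have hpos : ∀ t ∈ Set.Ioc (-T) T,
      ‖S t‖ ^ 2 ≤ Real.pi ^ 2 * T ^ 2 * (Stmt5Aux.fej δ t * ‖S t‖ ^ 2) := by
    intro t ht
    have habs : |t| ≤ T := abs_le.mpr ⟨le_of_lt ht.1, ht.2⟩
    have h1 := Stmt5Aux.fej_ge hT habs
    rw [← hδdef] at h1
    nlinarith [mul_le_mul_of_nonneg_right h1 (sq_nonneg ‖S t‖)]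
  have step1 : (∫ t in (-T)..T, ‖S t‖ ^ 2)
      ≤ Real.pi ^ 2 * T ^ 2 * ∫ t : ℝ, Stmt5Aux.fej δ t * ‖S t‖ ^ 2 := by
    rw [intervalIntegral.integral_of_le (by linarith : -T ≤ T)]
    have h2 := MeasureTheory.setIntegral_mono_on
      ((hScont.norm.pow 2).integrableOn_Ioc)
      ((hG.const_mul (Real.pi ^ 2 * T ^ 2)).integrableOn)
      measurableSet_Ioc hpos
    have h3 : (∫ t in Set.Ioc (-T) T, Real.pi ^ 2 * T ^ 2 * (Stmt5Aux.fej δ t * ‖S t‖ ^ 2))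
        = Real.pi ^ 2 * T ^ 2 * ∫ t in Set.Ioc (-T) T, Stmt5Aux.fej δ t * ‖S t‖ ^ 2 :=
      MeasureTheory.integral_const_mul _ _
    have h4 : (∫ t in Set.Ioc (-T) T, Stmt5Aux.fej δ t * ‖S t‖ ^ 2)
        ≤ ∫ t : ℝ, Stmt5Aux.fej δ t * ‖S t‖ ^ 2 :=
      MeasureTheory.setIntegral_le_integral hG (Filter.Eventually.of_forall fun t =>
        mul_nonneg (Stmt5Aux.fej_nonneg δ t) (sq_nonneg _))
    calc (∫ t in Set.Ioc (-T) T, ‖S t‖ ^ 2)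
        ≤ ∫ t in Set.Ioc (-T) T, Real.pi ^ 2 * T ^ 2 * (Stmt5Aux.fej δ t * ‖S t‖ ^ 2) := h2
      _ = Real.pi ^ 2 * T ^ 2 * ∫ t in Set.Ioc (-T) T, Stmt5Aux.fej δ t * ‖S t‖ ^ 2 := h3
      _ ≤ Real.pi ^ 2 * T ^ 2 * ∫ t : ℝ, Stmt5Aux.fej δ t * ‖S t‖ ^ 2 :=
          mul_le_mul_of_nonneg_left h4 (by positivity)
  have hconjS : ∀ t : ℝ, S t * (starRingEnd ℂ) (S t)
      = ∑ m₁ ∈ Finset.Icc 1 M, ∑ m₂ ∈ Finset.Icc 1 M,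
          (α m₁ * (starRingEnd ℂ) (α m₂))
            * Complex.exp (2 * (Real.pi : ℂ) * Complex.I * (((x m₁ - x m₂ : ℝ) : ℂ) * (t : ℂ))) := by
    intro t
    simp only [hS]
    rw [map_sum, Finset.sum_mul_sum]
    refine Finset.sum_congr rfl fun m₁ _ => Finset.sum_congr rfl fun m₂ _ => ?_
    rw [map_mul, ← Complex.exp_conj,
      show (starRingEnd ℂ) (2 * (Real.pi : ℂ) * Complex.I * ((x m₂ : ℂ) * (t : ℂ)))
        = -(2 * (Real.pi : ℂ) * Complex.I * ((x m₂ : ℂ) * (t : ℂ))) by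
          rw [show 2 * (Real.pi : ℂ) * Complex.I * ((x m₂ : ℂ) * (t : ℂ))
              = ((2 * Real.pi * (x m₂) * t : ℝ) : ℂ) * Complex.I by push_cast; ring,
            map_mul, Complex.conj_ofReal, Complex.conj_I]
          push_cast
          ring,
      mul_mul_mul_comm, ← Complex.exp_add]
    congr 2
    push_cast
    ring
  have hint : ∀ θ : ℝ, MeasureTheory.Integrable (fun t : ℝ =>
      ((Stmt5Aux.fej δ t : ℝ) : ℂ)
        * Complex.exp (2 * (Real.pi : ℂ) * Complex.I * ((θ : ℂ) * (t : ℂ)))) := by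
    intro θ
    have hb : ∀ t : ℝ,
        ‖Complex.exp (2 * (Real.pi : ℂ) * Complex.I * ((θ : ℂ) * (t : ℂ)))‖ ≤ 1 := by
      intro t
      rw [show 2 * (Real.pi : ℂ) * Complex.I * ((θ : ℂ) * (t : ℂ))
          = ((2 * Real.pi * θ * t : ℝ) : ℂ) * Complex.I by push_cast; ring,
        Complex.norm_exp_ofReal_mul_I]
    have h := (hK.ofReal).bdd_mul
      ((Complex.continuous_exp.comp (by fun_prop)).aestronglyMeasurable) (Filter.Eventually.of_forall hb)
    simpa [mul_comm] using h
  have hexp_int : (∫ t : ℝ, Stmt5Aux.fej δ t * ‖S t‖ ^ 2)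
      = (∑ m₁ ∈ Finset.Icc 1 M, ∑ m₂ ∈ Finset.Icc 1 M,
          (α m₁ * (starRingEnd ℂ) (α m₂)) * ((max 0 (δ - |x m₁ - x m₂|) : ℝ) : ℂ)).re := by
    have e0 : (fun t : ℝ => ((Stmt5Aux.fej δ t * ‖S t‖ ^ 2 : ℝ) : ℂ))
        = fun t : ℝ => ∑ m₁ ∈ Finset.Icc 1 M, ∑ m₂ ∈ Finset.Icc 1 M,
            (α m₁ * (starRingEnd ℂ) (α m₂))
              * (((Stmt5Aux.fej δ t : ℝ) : ℂ)
                * Complex.exp (2 * (Real.pi : ℂ) * Complex.I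
                    * (((x m₁ - x m₂ : ℝ) : ℂ) * (t : ℂ)))) := by
      funext t
      have h5 : ((‖S t‖ ^ 2 : ℝ) : ℂ) = S t * (starRingEnd ℂ) (S t) := by
        rw [Complex.mul_conj]
        norm_cast
        rw [← Complex.sq_norm]
      rw [Complex.ofReal_mul, h5, hconjS t, Finset.mul_sum]
      refine Finset.sum_congr rfl fun m₁ _ => ?_
      rw [Finset.mul_sum]
      refine Finset.sum_congr rfl fun m₂ _ => ?_
      ring
    have e1 : (∫ t : ℝ, Stmt5Aux.fej δ t * ‖S t‖ ^ 2)
        = (∫ t : ℝ, ((Stmt5Aux.fej δ t * ‖S t‖ ^ 2 : ℝ) : ℂ)).re := by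
      have h0 : (∫ t : ℝ, ((Stmt5Aux.fej δ t * ‖S t‖ ^ 2 : ℝ) : ℂ))
          = ((∫ t : ℝ, Stmt5Aux.fej δ t * ‖S t‖ ^ 2 : ℝ) : ℂ) := integral_ofReal
      rw [h0, Complex.ofReal_re]
    rw [e1, e0,
      MeasureTheory.integral_finset_sum _ (fun m₁ _ =>
        MeasureTheory.integrable_finset_sum _ (fun m₂ _ =>
          (hint (x m₁ - x m₂)).const_mul _))]
    congr 1
    refine Finset.sum_congr rfl fun m₁ _ => ?_
    rw [MeasureTheory.integral_finset_sum _ (fun m₂ _ => (hint (x m₁ - x m₂)).const_mul _)]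
    refine Finset.sum_congr rfl fun m₂ _ => ?_
    rw [MeasureTheory.integral_const_mul, Stmt5Aux.key_integral hδ (x m₁ - x m₂)]
  have hbound : (∑ m₁ ∈ Finset.Icc 1 M, ∑ m₂ ∈ Finset.Icc 1 M,
        (α m₁ * (starRingEnd ℂ) (α m₂)) * ((max 0 (δ - |x m₁ - x m₂|) : ℝ) : ℂ)).re
      ≤ δ * R := by
    rw [hR, Complex.re_sum, Finset.mul_sum]
    refine Finset.sum_le_sum fun m₁ _ => ?_
    rw [Complex.re_sum, Finset.mul_sum]
    refine Finset.sum_le_sum fun m₂ _ => ?_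
    rcases le_or_gt (2 * T * |x m₁ - x m₂|) 1 with hc | hc
    · rw [if_pos hc]
      have h6 : ((α m₁ * (starRingEnd ℂ) (α m₂)) * ((max 0 (δ - |x m₁ - x m₂|) : ℝ) : ℂ)).re
          ≤ ‖(α m₁ * (starRingEnd ℂ) (α m₂)) * ((max 0 (δ - |x m₁ - x m₂|) : ℝ) : ℂ)‖ := by
        exact Complex.re_le_norm _
      refine h6.trans ?_
      have h9 : ‖(α m₁ * (starRingEnd ℂ) (α m₂)) * ((max 0 (δ - |x m₁ - x m₂|) : ℝ) : ℂ)‖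
          = ‖α m₁ * α m₂‖ * max 0 (δ - |x m₁ - x m₂|) := by
        rw [norm_mul, norm_mul, RCLike.norm_conj, Complex.norm_real, Real.norm_eq_abs,
          abs_of_nonneg (le_max_left _ _), ← norm_mul]
      rw [h9]
      have h7 : max 0 (δ - |x m₁ - x m₂|) ≤ δ :=
        max_le (le_of_lt hδ) (by nlinarith [abs_nonneg (x m₁ - x m₂)])
      calc ‖α m₁ * α m₂‖ * max 0 (δ - |x m₁ - x m₂|) ≤ ‖α m₁ * α m₂‖ * δ :=
            mul_le_mul_of_nonneg_left h7 (norm_nonneg _)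
        _ = δ * ‖α m₁ * α m₂‖ := mul_comm _ _
    · rw [if_neg (not_le.mpr hc), mul_zero]
      have h8 : max 0 (δ - |x m₁ - x m₂|) = 0 := by
        apply max_eq_left
        have h10 : 1 / (2 * T) ≤ |x m₁ - x m₂| := by
          rw [div_le_iff₀ (by positivity)]
          nlinarith [hc]
        rw [hδdef]
        linarith
      rw [h8]
      simp
  show (1 / T) * (∫ t in (-T)..T, ‖S t‖ ^ 2) ≤ Real.pi ^ 2 / 2 * R
  have hchain : (∫ t in (-T)..T, ‖S t‖ ^ 2) ≤ Real.pi ^ 2 * T ^ 2 * (δ * R) := by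
    refine step1.trans (mul_le_mul_of_nonneg_left ?_ (by positivity))
    rw [hexp_int]
    exact hbound
  calc (1 / T) * (∫ t in (-T)..T, ‖S t‖ ^ 2)
      ≤ (1 / T) * (Real.pi ^ 2 * T ^ 2 * (δ * R)) :=
        mul_le_mul_of_nonneg_left hchain (by positivity)
    _ = Real.pi ^ 2 / 2 * R := by
        rw [hδdef]
        field_simp
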